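/- Let K ≥ 1 and n ≥ 1, and consider Kn items carrying labels in {1,…,K} with exactly n items per label. Let B ≥ 1 divide Kn, draw a permutation of the Kn items uniformly at random, and partition the permuted items into Kn/B consecutive batches of size B. Let T be the number of monochromatic batches (batches whose items all share the same label). Then E[T] = (K²n/B)·C(n,B)/C(Kn,B), and for every ε > 0, P(|T − E[T]| ≥ ε) ≤ 2·exp(−B·ε²/(2nK³)). -/

import Mathlib

namespace SGDBN10

/-- Batch `j` of the permutation `π` is monochromatic for the labels `label`. -/
def MonoBatch {m : ℕ} (B : ℕ) {K : ℕ} (label : Fin m → Fin K) (π : Equiv.Perm (Fin m))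
    (j : ℕ) : Prop :=
  ∀ i₁ i₂ : Fin m, (i₁ : ℕ) / B = j → (i₂ : ℕ) / B = j → label (π i₁) = label (π i₂)

instance {m : ℕ} (B : ℕ) {K : ℕ} (label : Fin m → Fin K) (π : Equiv.Perm (Fin m)) (j : ℕ) :
    Decidable (MonoBatch B label π j) := by
  unfold MonoBatch; infer_instance

/-- Number of monochromatic batches of the permutation `π`. -/
noncomputable def numMono {m : ℕ} (B : ℕ) {K : ℕ} (label : Fin m → Fin K)
    (π : Equiv.Perm (Fin m)) : ℕ :=
  ((Finset.range (m / B)).filter (fun j => MonoBatch B label π j)).card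

/-- Expected number of monochromatic batches under a uniformly random permutation. -/
noncomputable def expMono {m : ℕ} (B : ℕ) {K : ℕ} (label : Fin m → Fin K) : ℝ :=
  (∑ π : Equiv.Perm (Fin m), (numMono B label π : ℝ)) /
    (Fintype.card (Equiv.Perm (Fin m)) : ℝ)

open Finset

/-- Weighted Chebyshev sum inequality, fraction-free, with antivariance only on the support. -/
lemma chebyshev_antivary {ι : Type*} (s : Finset ι) (w φ ψ : ι → ℝ)
    (hw : ∀ i ∈ s, 0 ≤ w i)
    (hav : ∀ i ∈ s, ∀ j ∈ s, 0 < w i → 0 < w j → (φ i - φ j) * (ψ i - ψ j) ≤ 0) :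
    (∑ i ∈ s, w i * (φ i * ψ i)) * (∑ i ∈ s, w i) ≤
      (∑ i ∈ s, w i * φ i) * (∑ i ∈ s, w i * ψ i) := by
  have key : 0 ≤ ∑ i ∈ s, ∑ j ∈ s, w i * w j * (-((φ i - φ j) * (ψ i - ψ j))) := by
    refine Finset.sum_nonneg fun i hi => Finset.sum_nonneg fun j hj => ?_
    rcases (hw i hi).lt_or_eq with hwi | hwi
    · rcases (hw j hj).lt_or_eq with hwj | hwj
      · have h := hav i hi j hj hwi hwj
        have : 0 ≤ -((φ i - φ j) * (ψ i - ψ j)) := by linarith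
        exact mul_nonneg (mul_nonneg hwi.le hwj.le) this
      · rw [← hwj]; ring_nf; simp
    · rw [← hwi]; ring_nf; simp
  have hid : ∑ i ∈ s, ∑ j ∈ s, w i * w j * (-((φ i - φ j) * (ψ i - ψ j)))
      = (∑ i ∈ s, w i * φ i) * (∑ i ∈ s, w i * ψ i)
        + (∑ i ∈ s, w i * ψ i) * (∑ i ∈ s, w i * φ i)
        - (∑ i ∈ s, w i * (φ i * ψ i)) * (∑ i ∈ s, w i)
        - (∑ i ∈ s, w i) * (∑ i ∈ s, w i * (φ i * ψ i)) := by
    rw [Finset.sum_mul_sum, Finset.sum_mul_sum, Finset.sum_mul_sum, Finset.sum_mul_sum]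
    rw [← Finset.sum_add_distrib, ← Finset.sum_sub_distrib, ← Finset.sum_sub_distrib]
    refine Finset.sum_congr rfl fun i _ => ?_
    rw [← Finset.sum_add_distrib, ← Finset.sum_sub_distrib, ← Finset.sum_sub_distrib]
    refine Finset.sum_congr rfl fun j _ => ?_
    ring
  nlinarith [key, hid]

variable {α : Type*} [DecidableEq α] [Fintype α]

/-- Decomposition of a sum over `n`-subsets according to the intersection with `A`. -/
lemma sum_powersetCard_split (A : Finset α) (n : ℕ) (φ : Finset α → ℝ) :
    ∑ S ∈ (univ : Finset α).powersetCard n, φ S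
      = ∑ h ∈ range (n+1), ∑ U ∈ A.powersetCard h, ∑ V ∈ Aᶜ.powersetCard (n - h), φ (U ∪ V) := by
  have hmap : ∀ S ∈ (univ : Finset α).powersetCard n, (S ∩ A).card ∈ range (n+1) := by
    intro S hS
    rw [Finset.mem_powersetCard] at hS
    rw [Finset.mem_range, Nat.lt_succ_iff, ← hS.2]
    exact Finset.card_le_card (Finset.inter_subset_left)
  rw [← Finset.sum_fiberwise_of_maps_to hmap φ]
  refine Finset.sum_congr rfl fun h hh => ?_
  rw [Finset.mem_range, Nat.lt_succ_iff] at hh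
  rw [← Finset.sum_product']
  refine Finset.sum_bij' (fun S _ => (S ∩ A, S \ A)) (fun p _ => p.1 ∪ p.2) ?_ ?_ ?_ ?_ ?_
  · intro S hS
    rw [Finset.mem_filter, Finset.mem_powersetCard] at hS
    obtain ⟨⟨_, hcard⟩, hfib⟩ := hS
    rw [Finset.mem_product, Finset.mem_powersetCard, Finset.mem_powersetCard]
    dsimp only
    refine ⟨⟨Finset.inter_subset_right, hfib⟩, ⟨?_, ?_⟩⟩
    · intro x hx; rw [Finset.mem_compl]; exact (Finset.mem_sdiff.mp hx).2
    · have := Finset.card_inter_add_card_sdiff S A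
      omega
  · intro p hp
    rw [Finset.mem_product, Finset.mem_powersetCard, Finset.mem_powersetCard] at hp
    obtain ⟨⟨hU, hUc⟩, hV, hVc⟩ := hp
    have hdisj : Disjoint p.1 p.2 := by
      refine Finset.disjoint_left.mpr fun x hx1 hx2 => ?_
      exact (Finset.mem_compl.mp (hV hx2)) (hU hx1)
    have hint : (p.1 ∪ p.2) ∩ A = p.1 := by
      ext x
      simp only [Finset.mem_inter, Finset.mem_union]
      constructor
      · rintro ⟨hx1 | hx2, hxA⟩
        · exact hx1
        · exact absurd hxA (Finset.mem_compl.mp (hV hx2))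
      · intro hx; exact ⟨Or.inl hx, hU hx⟩
    rw [Finset.mem_filter, Finset.mem_powersetCard]
    refine ⟨⟨Finset.subset_univ _, ?_⟩, by rw [hint, hUc]⟩
    rw [Finset.card_union_of_disjoint hdisj, hUc, hVc]
    omega
  · intro S hS
    dsimp only
    rw [Finset.union_comm]
    exact Finset.sdiff_union_inter S A
  · intro p hp
    rw [Finset.mem_product, Finset.mem_powersetCard, Finset.mem_powersetCard] at hp
    obtain ⟨⟨hU, hUc⟩, hV, hVc⟩ := hp
    have hint : (p.1 ∪ p.2) ∩ A = p.1 := by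
      ext x
      simp only [Finset.mem_inter, Finset.mem_union]
      constructor
      · rintro ⟨hx1 | hx2, hxA⟩
        · exact hx1
        · exact absurd hxA (Finset.mem_compl.mp (hV hx2))
      · intro hx; exact ⟨Or.inl hx, hU hx⟩
    have hsd : (p.1 ∪ p.2) \ A = p.2 := by
      ext x
      simp only [Finset.mem_sdiff, Finset.mem_union]
      constructor
      · rintro ⟨hx1 | hx2, hxA⟩
        · exact absurd (hU hx1) hxA
        · exact hx2
      · intro hx; exact ⟨Or.inr hx, Finset.mem_compl.mp (hV hx)⟩
    rw [hint, hsd]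
  · intro S hS
    dsimp only
    rw [Finset.union_comm, Finset.sdiff_union_inter]




section Scratch
variable {α : Type*} [DecidableEq α] [Fintype α]

/-- Double counting step: averages of a monotone function over `k`-subsets grow with `k`. -/
lemma avg_step (W : Finset α) (f : Finset α → ℝ) (hf : Monotone f) {k : ℕ} (hk : k < W.card) :
    ((W.card - k : ℕ) : ℝ) * ∑ U ∈ W.powersetCard k, f U
      ≤ ((k+1 : ℕ) : ℝ) * ∑ T ∈ W.powersetCard (k+1), f T := by
  have e1 : ∑ U ∈ W.powersetCard k, ∑ _x ∈ W \ U, f U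
      = ((W.card - k : ℕ) : ℝ) * ∑ U ∈ W.powersetCard k, f U := by
    rw [Finset.mul_sum]
    refine Finset.sum_congr rfl fun U hU => ?_
    rw [Finset.mem_powersetCard] at hU
    rw [Finset.sum_const, Finset.card_sdiff_of_subset hU.1, hU.2, nsmul_eq_mul]
  have e2 : ∑ U ∈ W.powersetCard k, ∑ x ∈ W \ U, f U
      ≤ ∑ U ∈ W.powersetCard k, ∑ x ∈ W \ U, f (insert x U) := by
    refine Finset.sum_le_sum fun U _ => Finset.sum_le_sum fun x _ => ?_
    exact hf (Finset.subset_insert x U)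
  have e3 : ∑ U ∈ W.powersetCard k, ∑ x ∈ W \ U, f (insert x U)
      = ∑ T ∈ W.powersetCard (k+1), ∑ x ∈ T, f T := by
    rw [Finset.sum_sigma', Finset.sum_sigma']
    refine Finset.sum_bij' (fun p _ => (⟨insert p.2 p.1, p.2⟩ : (_ : Finset α) × α))
      (fun q _ => (⟨q.1.erase q.2, q.2⟩ : (_ : Finset α) × α)) ?_ ?_ ?_ ?_ ?_
    · rintro ⟨U, x⟩ hp
      rw [Finset.mem_sigma, Finset.mem_powersetCard] at hp
      obtain ⟨⟨hUW, hUc⟩, hx⟩ := hp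
      rw [Finset.mem_sdiff] at hx
      rw [Finset.mem_sigma, Finset.mem_powersetCard]
      refine ⟨⟨Finset.insert_subset hx.1 hUW, ?_⟩, Finset.mem_insert_self _ _⟩
      rw [Finset.card_insert_of_notMem hx.2, hUc]
    · rintro ⟨T, x⟩ hq
      rw [Finset.mem_sigma, Finset.mem_powersetCard] at hq
      obtain ⟨⟨hTW, hTc⟩, hx⟩ := hq
      rw [Finset.mem_sigma, Finset.mem_powersetCard]
      refine ⟨⟨(Finset.erase_subset _ _).trans hTW, ?_⟩, ?_⟩
      · rw [Finset.card_erase_of_mem hx, hTc]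
        omega
      · rw [Finset.mem_sdiff]
        exact ⟨hTW hx, Finset.notMem_erase _ _⟩
    · rintro ⟨U, x⟩ hp
      rw [Finset.mem_sigma, Finset.mem_powersetCard] at hp
      have hx := hp.2
      rw [Finset.mem_sdiff] at hx
      simp only [Finset.erase_insert hx.2]
    · rintro ⟨T, x⟩ hq
      rw [Finset.mem_sigma] at hq
      simp only [Finset.insert_erase hq.2]
    · rintro ⟨U, x⟩ hp
      rfl
  have e4 : ∑ T ∈ W.powersetCard (k+1), ∑ _x ∈ T, f T
      = ((k+1 : ℕ) : ℝ) * ∑ T ∈ W.powersetCard (k+1), f T := by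
    rw [Finset.mul_sum]
    refine Finset.sum_congr rfl fun T hT => ?_
    rw [Finset.mem_powersetCard] at hT
    rw [Finset.sum_const, hT.2, nsmul_eq_mul]
  calc ((W.card - k : ℕ) : ℝ) * ∑ U ∈ W.powersetCard k, f U = _ := e1.symm
    _ ≤ _ := e2
    _ = _ := e3
    _ = _ := e4

/-- Averages of a monotone function over `k`-subsets of `W` are monotone in `k`. -/
lemma avg_le_avg (W : Finset α) (f : Finset α → ℝ) (hf : Monotone f) {k l : ℕ}
    (hkl : k ≤ l) (hl : l ≤ W.card) :
    (∑ U ∈ W.powersetCard k, f U) / (W.card.choose k : ℝ)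
      ≤ (∑ U ∈ W.powersetCard l, f U) / (W.card.choose l : ℝ) := by
  induction l, hkl using Nat.le_induction with
  | base => exact le_rfl
  | succ l hkl ih =>
    have hlW : l < W.card := hl
    refine le_trans (ih hlW.le) ?_
    have h1 : (0:ℝ) < (W.card.choose l : ℝ) := by
      exact_mod_cast Nat.choose_pos hlW.le
    have h2 : (0:ℝ) < (W.card.choose (l+1) : ℝ) := by
      exact_mod_cast Nat.choose_pos hl
    have step := avg_step W f hf hlW
    have hid : (W.card.choose (l+1) : ℝ) * ((l+1 : ℕ) : ℝ)
        = (W.card.choose l : ℝ) * ((W.card - l : ℕ) : ℝ) := by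
      exact_mod_cast congrArg (Nat.cast (R := ℝ)) (Nat.choose_succ_right_eq W.card l)
    rw [div_le_div_iff₀ h1 h2]
    have hl1 : (0:ℝ) < ((l+1 : ℕ) : ℝ) := by positivity
    have key := mul_le_mul_of_nonneg_left step h1.le
    have h3 : (∑ U ∈ W.powersetCard l, f U) * (W.card.choose (l+1) : ℝ) * ((l+1:ℕ):ℝ)
        ≤ (∑ U ∈ W.powersetCard (l+1), f U) * (W.card.choose l : ℝ) * ((l+1:ℕ):ℝ) := by
      calc (∑ U ∈ W.powersetCard l, f U) * (W.card.choose (l+1) : ℝ) * ((l+1:ℕ):ℝ)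
          = (W.card.choose l : ℝ) * (((W.card - l : ℕ):ℝ) * ∑ U ∈ W.powersetCard l, f U) := by
            rw [mul_assoc, hid]; ring
        _ ≤ (W.card.choose l : ℝ) * (((l+1:ℕ):ℝ) * ∑ T ∈ W.powersetCard (l+1), f T) := key
        _ = (∑ U ∈ W.powersetCard (l+1), f U) * (W.card.choose l : ℝ) * ((l+1:ℕ):ℝ) := by ring
    exact le_of_mul_le_mul_right h3 hl1





lemma parts_inter {A U V : Finset α} (hU : U ⊆ A) (hV : V ⊆ Aᶜ) : (U ∪ V) ∩ A = U := by
  ext x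
  simp only [Finset.mem_inter, Finset.mem_union]
  constructor
  · rintro ⟨hx1 | hx2, hxA⟩
    · exact hx1
    · exact absurd hxA (Finset.mem_compl.mp (hV hx2))
  · intro hx; exact ⟨Or.inl hx, hU hx⟩

lemma parts_sdiff {A U V : Finset α} (hU : U ⊆ A) (hV : V ⊆ Aᶜ) : (U ∪ V) \ A = V := by
  ext x
  simp only [Finset.mem_sdiff, Finset.mem_union]
  constructor
  · rintro ⟨hx1 | hx2, hxA⟩
    · exact absurd (hU hx1) hxA
    · exact hx2
  · intro hx; exact ⟨Or.inr hx, Finset.mem_compl.mp (hV hx)⟩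

/-- Negative correlation of a monotone function of `S ∩ A` and a monotone function of `S \ A`
under the uniform distribution on `n`-subsets. -/
lemma corr_star_mono (A : Finset α) (n : ℕ) (f g : Finset α → ℝ)
    (hf : Monotone f) (hg : Monotone g)
    (hfA : ∀ S : Finset α, f (S ∩ A) = f S) (hgA : ∀ S : Finset α, g (S \ A) = g S) :
    (∑ S ∈ (univ : Finset α).powersetCard n, f S * g S)
        * ((((univ : Finset α).powersetCard n).card : ℕ) : ℝ)
      ≤ (∑ S ∈ (univ : Finset α).powersetCard n, f S)
        * (∑ S ∈ (univ : Finset α).powersetCard n, g S) := by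
  classical
  set F : ℕ → ℝ := fun h => ∑ U ∈ A.powersetCard h, f U with hF
  set G : ℕ → ℝ := fun h => ∑ V ∈ Aᶜ.powersetCard (n - h), g V with hG
  set a : ℕ → ℝ := fun h => (A.card.choose h : ℝ) with ha
  set b : ℕ → ℝ := fun h => ((Aᶜ.card).choose (n - h) : ℝ) with hb
  have hfUV : ∀ h : ℕ, ∀ U ∈ A.powersetCard h, ∀ V ∈ Aᶜ.powersetCard (n - h),
      f (U ∪ V) = f U := by
    intro h U hU V hV
    rw [Finset.mem_powersetCard] at hU hV
    rw [← hfA (U ∪ V), parts_inter hU.1 hV.1]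
  have hgUV : ∀ h : ℕ, ∀ U ∈ A.powersetCard h, ∀ V ∈ Aᶜ.powersetCard (n - h),
      g (U ∪ V) = g V := by
    intro h U hU V hV
    rw [Finset.mem_powersetCard] at hU hV
    rw [← hgA (U ∪ V), parts_sdiff hU.1 hV.1]
  have hbcard : ∀ h : ℕ, ((Aᶜ.powersetCard (n-h)).card : ℝ) = b h := by
    intro h; rw [Finset.card_powersetCard]
  have hacard : ∀ h : ℕ, ((A.powersetCard h).card : ℝ) = a h := by
    intro h; rw [Finset.card_powersetCard]
  have hfg : ∑ S ∈ (univ : Finset α).powersetCard n, f S * g S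
      = ∑ h ∈ range (n+1), F h * G h := by
    rw [sum_powersetCard_split A n (fun S => f S * g S)]
    refine Finset.sum_congr rfl fun h _ => ?_
    rw [hF, hG]
    rw [Finset.sum_mul_sum]
    refine Finset.sum_congr rfl fun U hU => Finset.sum_congr rfl fun V hV => ?_
    rw [hfUV h U hU V hV, hgUV h U hU V hV]
  have hsf : ∑ S ∈ (univ : Finset α).powersetCard n, f S
      = ∑ h ∈ range (n+1), F h * b h := by
    rw [sum_powersetCard_split A n f]
    refine Finset.sum_congr rfl fun h _ => ?_
    rw [hF, Finset.sum_mul]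
    refine Finset.sum_congr rfl fun U hU => ?_
    calc ∑ V ∈ Aᶜ.powersetCard (n-h), f (U ∪ V)
        = ∑ V ∈ Aᶜ.powersetCard (n-h), f U :=
          Finset.sum_congr rfl fun V hV => hfUV h U hU V hV
      _ = f U * b h := by
          rw [Finset.sum_const, nsmul_eq_mul, hbcard h, mul_comm]
  have hsg : ∑ S ∈ (univ : Finset α).powersetCard n, g S
      = ∑ h ∈ range (n+1), a h * G h := by
    rw [sum_powersetCard_split A n g]
    refine Finset.sum_congr rfl fun h _ => ?_
    calc ∑ U ∈ A.powersetCard h, ∑ V ∈ Aᶜ.powersetCard (n-h), g (U ∪ V)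
        = ∑ U ∈ A.powersetCard h, G h := by
          refine Finset.sum_congr rfl fun U hU => ?_
          rw [hG]
          exact Finset.sum_congr rfl fun V hV => hgUV h U hU V hV
      _ = a h * G h := by rw [Finset.sum_const, nsmul_eq_mul, hacard h]
  have hcard : ((((univ : Finset α).powersetCard n).card : ℕ) : ℝ)
      = ∑ h ∈ range (n+1), a h * b h := by
    have h1 : ∑ S ∈ (univ : Finset α).powersetCard n, (1:ℝ)
        = ((((univ : Finset α).powersetCard n).card : ℕ) : ℝ) := by
      rw [Finset.sum_const, nsmul_eq_mul, mul_one]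
    rw [← h1, sum_powersetCard_split A n (fun _ => (1:ℝ))]
    refine Finset.sum_congr rfl fun h _ => ?_
    calc ∑ U ∈ A.powersetCard h, ∑ _V ∈ Aᶜ.powersetCard (n-h), (1:ℝ)
        = ∑ U ∈ A.powersetCard h, b h := by
          refine Finset.sum_congr rfl fun U hU => ?_
          rw [Finset.sum_const, nsmul_eq_mul, mul_one, hbcard h]
      _ = a h * b h := by rw [Finset.sum_const, nsmul_eq_mul, hacard h]
  -- the Chebyshev step
  have posparts : ∀ h : ℕ, 0 < a h * b h → 0 < a h ∧ 0 < b h := by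
    intro h hw
    have h0a : (0:ℝ) ≤ a h := by positivity
    have h0b : (0:ℝ) ≤ b h := by positivity
    rcases h0a.lt_or_eq with h' | h'
    · rcases h0b.lt_or_eq with h'' | h''
      · exact ⟨h', h''⟩
      · rw [← h''] at hw; simp at hw
    · rw [← h'] at hw; simp at hw
  have hjA : ∀ h : ℕ, 0 < a h → h ≤ A.card := by
    intro h hah
    by_contra hcon
    push_neg at hcon
    rw [ha] at hah
    simp only [Nat.choose_eq_zero_of_lt hcon] at hah
    norm_num at hah
  have hiB : ∀ h : ℕ, 0 < b h → n - h ≤ Aᶜ.card := by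
    intro h hbh
    by_contra hcon
    push_neg at hcon
    rw [hb] at hbh
    simp only [Nat.choose_eq_zero_of_lt hcon] at hbh
    norm_num at hbh
  have keymono : ∀ i j : ℕ, i ≤ j → 0 < a i * b i → 0 < a j * b j →
      (F i / a i - F j / a j) * (G i / b i - G j / b j) ≤ 0 := by
    intro i j hij hwi hwj
    obtain ⟨hai, hbi⟩ := posparts i hwi
    obtain ⟨haj, hbj⟩ := posparts j hwj
    have hφ : F i / a i ≤ F j / a j := avg_le_avg A f hf hij (hjA j haj)
    have hψ : G j / b j ≤ G i / b i := by
      have := avg_le_avg Aᶜ g hg (Nat.sub_le_sub_left hij n) (hiB i hbi)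
      exact this
    have h1 : F i / a i - F j / a j ≤ 0 := sub_nonpos.mpr hφ
    have h2 : 0 ≤ G i / b i - G j / b j := sub_nonneg.mpr hψ
    calc (F i / a i - F j / a j) * (G i / b i - G j / b j)
        = -((-(F i / a i - F j / a j)) * (G i / b i - G j / b j)) := by ring
      _ ≤ 0 := neg_nonpos.mpr (mul_nonneg (neg_nonneg.mpr h1) h2)
  have cheb := chebyshev_antivary (range (n+1)) (fun h => a h * b h)
      (fun h => F h / a h) (fun h => G h / b h)
      (fun i _ => by positivity)
      (by
        intro i _ j _ hwi hwj
        rcases le_total i j with hij | hij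
        · exact keymono i j hij hwi hwj
        · have := keymono j i hij hwj hwi
          calc (F i / a i - F j / a j) * (G i / b i - G j / b j)
              = (F j / a j - F i / a i) * (G j / b j - G i / b i) := by ring
            _ ≤ 0 := this)
  have hFzero : ∀ h : ℕ, a h = 0 → F h = 0 := by
    intro h hA0
    have hcc : (A.powersetCard h).card = 0 := by
      rw [Finset.card_powersetCard]
      rw [ha] at hA0
      simp only [] at hA0
      exact_mod_cast hA0
    show (∑ U ∈ A.powersetCard h, f U) = 0
    rw [Finset.card_eq_zero.mp hcc, Finset.sum_empty]
  have hGzero : ∀ h : ℕ, b h = 0 → G h = 0 := by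
    intro h hB0
    have hcc : (Aᶜ.powersetCard (n-h)).card = 0 := by
      rw [Finset.card_powersetCard]
      rw [hb] at hB0
      simp only [] at hB0
      exact_mod_cast hB0
    show (∑ V ∈ Aᶜ.powersetCard (n-h), g V) = 0
    rw [Finset.card_eq_zero.mp hcc, Finset.sum_empty]
  have e1 : ∀ h ∈ range (n+1), (a h * b h) * ((F h / a h) * (G h / b h)) = F h * G h := by
    intro h _
    by_cases hA0 : a h = 0
    · rw [hA0, hFzero h hA0]; ring
    · by_cases hB0 : b h = 0
      · rw [hB0, hGzero h hB0]; ring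
      · field_simp
  have e2 : ∀ h ∈ range (n+1), (a h * b h) * (F h / a h) = F h * b h := by
    intro h _
    by_cases hA0 : a h = 0
    · rw [hA0, hFzero h hA0]; ring
    · field_simp
  have e3 : ∀ h ∈ range (n+1), (a h * b h) * (G h / b h) = a h * G h := by
    intro h _
    by_cases hB0 : b h = 0
    · rw [hB0, hGzero h hB0]; ring
    · field_simp
  calc (∑ S ∈ (univ : Finset α).powersetCard n, f S * g S)
          * ((((univ : Finset α).powersetCard n).card : ℕ) : ℝ)
      = (∑ h ∈ range (n+1), (a h * b h) * ((F h / a h) * (G h / b h)))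
          * (∑ h ∈ range (n+1), a h * b h) := by
        rw [hfg, hcard, Finset.sum_congr rfl e1]
    _ ≤ (∑ h ∈ range (n+1), (a h * b h) * (F h / a h))
          * (∑ h ∈ range (n+1), (a h * b h) * (G h / b h)) := cheb
    _ = (∑ h ∈ range (n+1), F h * b h) * (∑ h ∈ range (n+1), a h * G h) := by
        rw [Finset.sum_congr rfl e2, Finset.sum_congr rfl e3]
    _ = _ := by rw [← hsf, ← hsg]

/-- General direction version: both monotone or both antitone. -/
lemma corr_star (A : Finset α) (n : ℕ) (f g : Finset α → ℝ)
    (hmono : (Monotone f ∧ Monotone g) ∨ (Antitone f ∧ Antitone g))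
    (hfA : ∀ S : Finset α, f (S ∩ A) = f S) (hgA : ∀ S : Finset α, g (S \ A) = g S) :
    (∑ S ∈ (univ : Finset α).powersetCard n, f S * g S)
        * ((((univ : Finset α).powersetCard n).card : ℕ) : ℝ)
      ≤ (∑ S ∈ (univ : Finset α).powersetCard n, f S)
        * (∑ S ∈ (univ : Finset α).powersetCard n, g S) := by
  rcases hmono with ⟨hf, hg⟩ | ⟨hf, hg⟩
  · exact corr_star_mono A n f g hf hg hfA hgA
  · have h := corr_star_mono A n (fun S => -f S) (fun S => -g S)
      (fun S T hST => neg_le_neg (hf hST)) (fun S T hST => neg_le_neg (hg hST))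
      (fun S => by rw [neg_inj]; exact hfA S) (fun S => by rw [neg_inj]; exact hgA S)
    simp only [neg_mul_neg, Finset.sum_neg_distrib] at h
    exact h

/-- Expectation over a uniformly random `n`-subset. -/
noncomputable def Esub (α : Type*) [Fintype α] (n : ℕ) (F : Finset α → ℝ) : ℝ :=
  (∑ S ∈ (univ : Finset α).powersetCard n, F S) / ((Fintype.card α).choose n : ℝ)

lemma Esub_nonneg {n : ℕ} {F : Finset α → ℝ} (hF : ∀ S, 0 ≤ F S) : 0 ≤ Esub α n F :=
  div_nonneg (Finset.sum_nonneg fun S _ => hF S) (by positivity)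

lemma Esub_const_one {n : ℕ} (hn : n ≤ Fintype.card α) : Esub α n (fun _ => 1) = 1 := by
  rw [Esub, Finset.sum_const, nsmul_eq_mul, mul_one, Finset.card_powersetCard,
    Finset.card_univ, div_self]
  exact_mod_cast (Nat.choose_pos hn).ne'

lemma corr_E {n : ℕ} (hn : n ≤ Fintype.card α) (A : Finset α) (f g : Finset α → ℝ)
    (hmono : (Monotone f ∧ Monotone g) ∨ (Antitone f ∧ Antitone g))
    (hfA : ∀ S : Finset α, f (S ∩ A) = f S) (hgA : ∀ S : Finset α, g (S \ A) = g S) :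
    Esub α n (fun S => f S * g S) ≤ Esub α n f * Esub α n g := by
  have hC : (0:ℝ) < ((Fintype.card α).choose n : ℝ) := by
    exact_mod_cast Nat.choose_pos hn
  have hstar := corr_star A n f g hmono hfA hgA
  have hcc : ((((univ : Finset α).powersetCard n).card : ℕ) : ℝ)
      = ((Fintype.card α).choose n : ℝ) := by
    rw [Finset.card_powersetCard, Finset.card_univ]
  rw [hcc] at hstar
  rw [Esub, Esub, Esub, div_mul_div_comm, div_le_div_iff₀ hC (by positivity)]
  nlinarith [mul_le_mul_of_nonneg_right hstar hC.le]

/-- Product correlation inequality for monotone (or antitone) nonnegative local functions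
on pairwise disjoint index sets. -/
lemma corr_prod {ι : Type*} [DecidableEq ι] {n : ℕ} (hn : n ≤ Fintype.card α) (J : Finset ι)
    (Bl : ι → Finset α) (f : ι → Finset α → ℝ)
    (hdisj : ∀ i ∈ J, ∀ j ∈ J, i ≠ j → Disjoint (Bl i) (Bl j))
    (hnn : ∀ j ∈ J, ∀ S, 0 ≤ f j S)
    (hloc : ∀ j ∈ J, ∀ S, f j (S ∩ Bl j) = f j S)
    (hmono : (∀ j ∈ J, Monotone (f j)) ∨ (∀ j ∈ J, Antitone (f j))) :
    Esub α n (fun S => ∏ j ∈ J, f j S) ≤ ∏ j ∈ J, Esub α n (f j) := by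
  classical
  suffices H : ∀ J' : Finset ι, J' ⊆ J →
      Esub α n (fun S => ∏ j ∈ J', f j S) ≤ ∏ j ∈ J', Esub α n (f j) from
    H J Finset.Subset.rfl
  intro J'
  induction J' using Finset.induction_on with
  | empty =>
    intro _
    simp only [Finset.prod_empty]
    exact le_of_eq (Esub_const_one hn)
  | @insert j₀ J' hj₀ ih =>
    intro hsub
    have hj₀J : j₀ ∈ J := hsub (Finset.mem_insert_self _ _)
    have hsub' : J' ⊆ J := fun x hx => hsub (Finset.mem_insert_of_mem hx)
    have hprodins : ∀ S : Finset α, ∏ j ∈ insert j₀ J', f j S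
        = f j₀ S * ∏ j ∈ J', f j S := fun S => Finset.prod_insert hj₀
    simp only [hprodins]
    set g : Finset α → ℝ := fun S => ∏ j ∈ J', f j S with hgdef
    have hgnn : ∀ S, 0 ≤ g S := fun S =>
      Finset.prod_nonneg fun j hj => hnn j (hsub' hj) S
    have hgloc : ∀ S : Finset α, g (S \ Bl j₀) = g S := by
      intro S
      rw [hgdef]
      refine Finset.prod_congr rfl fun j hj => ?_
      have hne : j₀ ≠ j := fun h => hj₀ (h ▸ hj)
      have hdj : Disjoint (Bl j₀) (Bl j) := hdisj j₀ hj₀J j (hsub' hj) hne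
      have hset : (S \ Bl j₀) ∩ Bl j = S ∩ Bl j := by
        ext x
        simp only [Finset.mem_inter, Finset.mem_sdiff]
        constructor
        · rintro ⟨⟨hxS, _⟩, hxj⟩; exact ⟨hxS, hxj⟩
        · rintro ⟨hxS, hxj⟩
          exact ⟨⟨hxS, fun hx0 => (Finset.disjoint_left.mp hdj hx0) hxj⟩, hxj⟩
      rw [← hloc j (hsub' hj) (S \ Bl j₀), hset, hloc j (hsub' hj) S]
    have hmm : (Monotone (f j₀) ∧ Monotone g) ∨ (Antitone (f j₀) ∧ Antitone g) := by
      rcases hmono with hm | hm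
      · left
        refine ⟨hm j₀ hj₀J, fun S T hST => ?_⟩
        exact Finset.prod_le_prod (fun j hj => hnn j (hsub' hj) S)
          (fun j hj => hm j (hsub' hj) hST)
      · right
        refine ⟨hm j₀ hj₀J, fun S T hST => ?_⟩
        exact Finset.prod_le_prod (fun j hj => hnn j (hsub' hj) T)
          (fun j hj => hm j (hsub' hj) hST)
    have key := corr_E hn (Bl j₀) (f j₀) g hmm (hloc j₀ hj₀J) hgloc
    have hEf : 0 ≤ Esub α n (f j₀) := Esub_nonneg (hnn j₀ hj₀J)
    calc Esub α n (fun S => f j₀ S * g S) ≤ Esub α n (f j₀) * Esub α n g := key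
      _ ≤ Esub α n (f j₀) * ∏ j ∈ J', Esub α n (f j) :=
          mul_le_mul_of_nonneg_left (ih hsub') hEf
      _ = ∏ j ∈ insert j₀ J', Esub α n (f j) := (Finset.prod_insert (f := fun j => Esub α n (f j)) hj₀).symm

/-- Convexity bound: `exp (t x) ≤ cosh t + x sinh t` for `x ∈ [-1, 1]`. -/
lemma exp_bound_pm (x t : ℝ) (h1 : -1 ≤ x) (h2 : x ≤ 1) :
    Real.exp (t * x) ≤ Real.cosh t + x * Real.sinh t := by
  have key := convexOn_exp.2 (Set.mem_univ (-t)) (Set.mem_univ t)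
    (show (0:ℝ) ≤ (1-x)/2 by linarith) (show (0:ℝ) ≤ (1+x)/2 by linarith)
    (show (1-x)/2 + (1+x)/2 = 1 by ring)
  simp only [smul_eq_mul] at key
  have harg : (1-x)/2 * (-t) + (1+x)/2 * t = t * x := by ring
  rw [harg] at key
  rw [Real.cosh_eq, Real.sinh_eq]
  calc Real.exp (t * x) ≤ (1-x)/2 * Real.exp (-t) + (1+x)/2 * Real.exp t := key
    _ = (Real.exp t + Real.exp (-t)) / 2 + x * ((Real.exp t - Real.exp (-t)) / 2) := by ring

/-- MGF of a Bernoulli: `1 - q + q e^t ≤ e^{tq} cosh t` for `q ∈ [0,1]`. -/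
lemma mgf_bernoulli (t q : ℝ) (h0 : 0 ≤ q) (h1 : q ≤ 1) :
    1 - q + q * Real.exp t ≤ Real.exp (t * q) * Real.cosh t := by
  have ha := exp_bound_pm (-q) t (by linarith) (by linarith)
  have hb := exp_bound_pm (1-q) t (by linarith) (by linarith)
  have hep : (0:ℝ) < Real.exp (t*q) := Real.exp_pos _
  have e1 : Real.exp (t*q) * Real.exp (t*(-q)) = 1 := by
    rw [← Real.exp_add]
    norm_num
  have e2 : Real.exp (t*q) * Real.exp (t*(1-q)) = Real.exp t := by
    rw [← Real.exp_add]
    ring_nf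
  have hid : 1 - q + q * Real.exp t
      = Real.exp (t*q) * ((1-q) * Real.exp (t * (-q)) + q * Real.exp (t*(1-q))) := by
    linear_combination (q - 1) * e1 - q * e2
  rw [hid]
  have hcomb : (1-q) * Real.exp (t*(-q)) + q * Real.exp (t*(1-q)) ≤ Real.cosh t := by
    calc (1-q) * Real.exp (t*(-q)) + q * Real.exp (t*(1-q))
        ≤ (1-q) * (Real.cosh t + (-q) * Real.sinh t)
          + q * (Real.cosh t + (1-q) * Real.sinh t) :=
          add_le_add (mul_le_mul_of_nonneg_left ha (by linarith))
            (mul_le_mul_of_nonneg_left hb h0)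
      _ = Real.cosh t := by ring
  exact mul_le_mul_of_nonneg_left hcomb hep.le

end Scratch
section Perms

variable {K n B : ℕ} (label : Fin (K*n) → Fin K)

/-- The batch `j` as a finset of positions. -/
def blockF (K n B : ℕ) (j : ℕ) : Finset (Fin (K*n)) :=
  univ.filter (fun i => (i : ℕ)/B = j)

/-- Number of batches entirely inside `S`. -/
def NB (K n B : ℕ) (S : Finset (Fin (K*n))) : ℕ :=
  ((range (K*n/B)).filter (fun j => blockF K n B j ⊆ S)).card

/-- Positions given label `c` by the permutation `p`. -/
def Sc (p : Equiv.Perm (Fin (K*n))) (c : Fin K) : Finset (Fin (K*n)) :=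
  univ.filter (fun i => label (p i) = c)

lemma Sc_mem (hbal : ∀ c : Fin K, (Finset.univ.filter (fun i => label i = c)).card = n)
    (p : Equiv.Perm (Fin (K*n))) (c : Fin K) :
    Sc label p c ∈ (univ : Finset (Fin (K*n))).powersetCard n := by
  rw [Finset.mem_powersetCard]
  refine ⟨Finset.subset_univ _, ?_⟩
  have himg : Sc label p c
      = (univ.filter (fun x => label x = c)).image p.symm := by
    ext i
    simp only [Sc, Finset.mem_filter, Finset.mem_univ, true_and, Finset.mem_image]
    constructor
    · intro h; exact ⟨p i, h, p.symm_apply_apply i⟩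
    · rintro ⟨x, hx, rfl⟩; simpa using hx
  rw [himg, Finset.card_image_of_injective _ p.symm.injective, hbal c]

/-- Transfer: expectations of functions of `Sc` over a uniform permutation equal
expectations over a uniform `n`-subset. -/
lemma transfer (hK : 1 ≤ K)
    (hbal : ∀ c : Fin K, (Finset.univ.filter (fun i => label i = c)).card = n)
    (c : Fin K) (F : Finset (Fin (K*n)) → ℝ) :
    (∑ p : Equiv.Perm (Fin (K*n)), F (Sc label p c))
        / (Fintype.card (Equiv.Perm (Fin (K*n))) : ℝ)
      = Esub (Fin (K*n)) n F := by
  classical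
  set PC := (univ : Finset (Fin (K*n))).powersetCard n with hPC
  set fib : Finset (Fin (K*n)) → ℕ :=
    fun S => ((univ : Finset (Equiv.Perm (Fin (K*n)))).filter (fun p => Sc label p c = S)).card
    with hfib
  have hmaps : ∀ p ∈ (univ : Finset (Equiv.Perm (Fin (K*n)))), Sc label p c ∈ PC :=
    fun p _ => Sc_mem label hbal p c
  -- fibers are equicardinal
  have hequi : ∀ S ∈ PC, ∀ S' ∈ PC, fib S = fib S' := by
    intro S hS S' hS'
    rw [Finset.mem_powersetCard] at hS hS'
    have hcards : S'.card = S.card := by rw [hS.2, hS'.2]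
    have e : {x // x ∈ S'} ≃ {x // x ∈ S} := Finset.equivOfCardEq hcards
    set σ : Equiv.Perm (Fin (K*n)) := e.extendSubtype with hσ
    have hσmem : ∀ i, σ i ∈ S ↔ i ∈ S' := by
      intro i
      by_cases hi : i ∈ S'
      · simp only [hi, iff_true]
        exact e.extendSubtype_mem i hi
      · simp only [hi, iff_false]
        exact e.extendSubtype_not_mem i hi
    refine Finset.card_bij' (fun p _ => p * σ) (fun p _ => p * σ⁻¹) ?_ ?_ ?_ ?_
    · intro p hp
      rw [Finset.mem_filter] at hp ⊢
      refine ⟨Finset.mem_univ _, ?_⟩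
      ext i
      simp only [Sc, Finset.mem_filter, Finset.mem_univ, true_and, Equiv.Perm.mul_apply]
      rw [← hσmem i, ← hp.2]
      simp only [Sc, Finset.mem_filter, Finset.mem_univ, true_and]
      exact ⟨fun h => (Finset.mem_filter.mp h).2, fun h => Finset.mem_filter.mpr ⟨Finset.mem_univ _, h⟩⟩
    · intro p hp
      rw [Finset.mem_filter] at hp ⊢
      refine ⟨Finset.mem_univ _, ?_⟩
      ext i
      simp only [Sc, Finset.mem_filter, Finset.mem_univ, true_and, Equiv.Perm.mul_apply]
      have : σ⁻¹ i ∈ S' ↔ i ∈ S := by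
        rw [← hσmem (σ⁻¹ i)]
        simp
      rw [← this, ← hp.2]
      simp only [Sc, Finset.mem_filter, Finset.mem_univ, true_and]
      exact ⟨fun h => (Finset.mem_filter.mp h).2, fun h => Finset.mem_filter.mpr ⟨Finset.mem_univ _, h⟩⟩
    · intro p _; simp [mul_assoc]
    · intro p _; simp [mul_assoc]
  -- decompose the sum over permutations into fibers
  have hdecomp : ∀ G : Finset (Fin (K*n)) → ℝ,
      (∑ p : Equiv.Perm (Fin (K*n)), G (Sc label p c)) = ∑ S ∈ PC, (fib S : ℝ) * G S := by
    intro G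
    rw [← Finset.sum_fiberwise_of_maps_to hmaps (fun p => G (Sc label p c))]
    refine Finset.sum_congr rfl fun S hS => ?_
    calc ∑ p ∈ univ.filter (fun p => Sc label p c = S), G (Sc label p c)
        = ∑ p ∈ univ.filter (fun p => Sc label p c = S), G S := by
          refine Finset.sum_congr rfl fun p hp => ?_
          rw [(Finset.mem_filter.mp hp).2]
      _ = (fib S : ℝ) * G S := by rw [Finset.sum_const, nsmul_eq_mul]
  -- nonemptiness and the constant fiber size
  have hnm : n ≤ K * n := Nat.le_mul_of_pos_left n hK
  have hCpos : 0 < (K*n).choose n := Nat.choose_pos hnm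
  have hPCcard : PC.card = (K*n).choose n := by
    rw [hPC, Finset.card_powersetCard, Finset.card_univ, Fintype.card_fin]
  obtain ⟨S₀, hS₀⟩ := Finset.card_pos.mp (by rw [hPCcard]; exact hCpos)
  have hfibconst : ∀ S ∈ PC, fib S = fib S₀ := fun S hS => hequi S hS S₀ hS₀
  have htotal : (PC.card) * fib S₀ = Fintype.card (Equiv.Perm (Fin (K*n))) := by
    have h1 := hdecomp (fun _ => (1:ℝ))
    have hL : (∑ _p : Equiv.Perm (Fin (K*n)), (1:ℝ))
        = (Fintype.card (Equiv.Perm (Fin (K*n))) : ℝ) := by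
      rw [Finset.sum_const, nsmul_eq_mul, mul_one, Finset.card_univ]
    have hR : (∑ S ∈ PC, (fib S : ℝ) * 1) = (PC.card : ℝ) * (fib S₀ : ℝ) := by
      rw [Finset.sum_congr rfl (fun S hS => by rw [mul_one, hfibconst S hS])]
      rw [Finset.sum_const, nsmul_eq_mul]
    rw [hL, hR] at h1
    exact_mod_cast h1.symm
  have hfibpos : 0 < fib S₀ := by
    rcases Nat.eq_zero_or_pos (fib S₀) with h | h
    · exfalso
      rw [h, mul_zero] at htotal
      have hcp : (0:ℕ) < Fintype.card (Equiv.Perm (Fin (K*n))) := Fintype.card_pos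
      omega
    · exact h
  -- conclude
  rw [hdecomp F]
  have : (∑ S ∈ PC, (fib S : ℝ) * F S) = (fib S₀ : ℝ) * ∑ S ∈ PC, F S := by
    rw [Finset.mul_sum]
    exact Finset.sum_congr rfl fun S hS => by rw [hfibconst S hS]
  rw [this, Esub]
  have hcardperm : (Fintype.card (Equiv.Perm (Fin (K*n))) : ℝ)
      = ((K*n).choose n : ℝ) * (fib S₀ : ℝ) := by
    rw [← htotal, hPCcard]; push_cast; ring
  rw [hcardperm, Fintype.card_fin]
  have hC0 : ((K*n).choose n : ℝ) ≠ 0 := by exact_mod_cast hCpos.ne'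
  have hf0 : (fib S₀ : ℝ) ≠ 0 := by exact_mod_cast hfibpos.ne'
  field_simp
  ring

end Perms

section Esubextra
variable {α : Type*} [DecidableEq α] [Fintype α]

lemma Esub_congr {n : ℕ} {F G : Finset α → ℝ} (h : ∀ S, F S = G S) :
    Esub α n F = Esub α n G := by
  rw [Esub, Esub]
  exact congrArg (· / _) (Finset.sum_congr rfl fun S _ => h S)

lemma Esub_affine {n : ℕ} (hn : n ≤ Fintype.card α) (a b : ℝ) (F : Finset α → ℝ) :
    Esub α n (fun S => a + b * F S) = a + b * Esub α n F := by
  have hC : ((Fintype.card α).choose n : ℝ) ≠ 0 := by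
    exact_mod_cast (Nat.choose_pos hn).ne'
  rw [Esub, Esub, Finset.sum_add_distrib, ← Finset.mul_sum, Finset.sum_const, nsmul_eq_mul,
    Finset.card_powersetCard, Finset.card_univ]
  field_simp

lemma Esub_mono {n : ℕ} {F G : Finset α → ℝ} (h : ∀ S, F S ≤ G S) :
    Esub α n F ≤ Esub α n G := by
  rw [Esub, Esub]
  rcases (Nat.cast_nonneg ((Fintype.card α).choose n) : (0:ℝ) ≤ _).eq_or_lt with hC | hC
  · rw [← hC, div_zero, div_zero]
  · exact (div_le_div_iff_of_pos_right hC).mpr (Finset.sum_le_sum fun S _ => h S)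

lemma Esub_sum {n : ℕ} {ι : Type*} (J : Finset ι) (F : ι → Finset α → ℝ) :
    Esub α n (fun S => ∑ j ∈ J, F j S) = ∑ j ∈ J, Esub α n (F j) := by
  rw [Esub, Finset.sum_comm, Finset.sum_div]
  rfl

lemma count_supersets {nn Bc : ℕ} (D : Finset α) (hD : D.card = Bc) (hBn : Bc ≤ nn) :
    (((univ : Finset α).powersetCard nn).filter (fun S => D ⊆ S)).card
      = (Fintype.card α - Bc).choose (nn - Bc) := by
  have hbij : (((univ : Finset α).powersetCard nn).filter (fun S => D ⊆ S)).card
      = (Dᶜ.powersetCard (nn - Bc)).card := by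
    apply Finset.card_bij' (fun S _ => S \ D) (fun V _ => V ∪ D)
    · intro S hS
      rw [Finset.mem_filter, Finset.mem_powersetCard] at hS
      obtain ⟨⟨_, hcard⟩, hsub⟩ := hS
      rw [Finset.mem_powersetCard]
      constructor
      · intro x hx
        rw [Finset.mem_compl]
        exact (Finset.mem_sdiff.mp hx).2
      · rw [Finset.card_sdiff_of_subset hsub, hcard, hD]
    · intro V hV
      rw [Finset.mem_powersetCard] at hV
      obtain ⟨hVsub, hVcard⟩ := hV
      have hdisj : Disjoint V D := by
        rw [Finset.disjoint_left]
        intro x hxV hxD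
        exact (Finset.mem_compl.mp (hVsub hxV)) hxD
      rw [Finset.mem_filter, Finset.mem_powersetCard]
      refine ⟨⟨Finset.subset_univ _, ?_⟩, Finset.subset_union_right⟩
      rw [Finset.card_union_of_disjoint hdisj, hVcard, hD]
      omega
    · intro S hS
      rw [Finset.mem_filter] at hS
      exact Finset.sdiff_union_of_subset hS.2
    · intro V hV
      rw [Finset.mem_powersetCard] at hV
      have hdisj : Disjoint V D := by
        rw [Finset.disjoint_left]
        intro x hxV hxD
        exact (Finset.mem_compl.mp (hV.1 hxV)) hxD
      rw [Finset.union_sdiff_cancel_right hdisj]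
  rw [hbij, Finset.card_powersetCard, Finset.card_compl, hD]

lemma count_supersets_zero {nn Bc : ℕ} (D : Finset α) (hD : D.card = Bc) (hBn : nn < Bc) :
    (((univ : Finset α).powersetCard nn).filter (fun S => D ⊆ S)) = ∅ := by
  rw [Finset.filter_eq_empty_iff]
  intro S hS
  rw [Finset.mem_powersetCard] at hS
  intro hsub
  have := Finset.card_le_card hsub
  omega

end Esubextra

section Blocks

variable {K n B : ℕ}

lemma blockF_disj {i j : ℕ} (hij : i ≠ j) : Disjoint (blockF K n B i) (blockF K n B j) := by
  rw [Finset.disjoint_left]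
  intro x hx1 hx2
  rw [blockF, Finset.mem_filter] at hx1 hx2
  exact hij (by rw [← hx1.2, hx2.2])

lemma blockF_card (hB : 1 ≤ B) (hdvd : B ∣ K*n) {j : ℕ} (hj : j < K*n/B) :
    (blockF K n B j).card = B := by
  have hjB1 : (j+1) * B ≤ K*n := by
    have h1 : (j+1) * B ≤ (K*n/B) * B := Nat.mul_le_mul_right _ hj
    rwa [Nat.div_mul_cancel hdvd] at h1
  have key : (blockF K n B j).card = ((Finset.range (K*n)).filter (fun i => i / B = j)).card := by
    apply Finset.card_bij (fun (i : Fin (K*n)) _ => (i : ℕ))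
    · intro i hi
      rw [blockF, Finset.mem_filter] at hi
      rw [Finset.mem_filter, Finset.mem_range]
      exact ⟨i.isLt, hi.2⟩
    · intro i _ i' _ h
      exact Fin.val_injective h
    · intro x hx
      rw [Finset.mem_filter, Finset.mem_range] at hx
      refine ⟨⟨x, hx.1⟩, ?_, rfl⟩
      rw [blockF, Finset.mem_filter]
      exact ⟨Finset.mem_univ _, hx.2⟩
  rw [key]
  have hico : (Finset.range (K*n)).filter (fun i => i / B = j) = Finset.Ico (j*B) (j*B + B) := by
    ext x
    rw [Finset.mem_filter, Finset.mem_range, Finset.mem_Ico]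
    have hexp : (j+1)*B = j*B + B := by ring
    constructor
    · rintro ⟨hxm, hdiv⟩
      have h1 : j * B ≤ x := by
        rw [← hdiv]
        exact Nat.div_mul_le_self x B
      have h2 : x < (j+1) * B := (Nat.div_lt_iff_lt_mul hB).mp (by omega)
      omega
    · rintro ⟨h1, h2⟩
      have hlt : x < (j+1)*B := by omega
      have hdiv : x / B = j := by
        have hle : j ≤ x / B := (Nat.le_div_iff_mul_le hB).mpr h1
        have hlt2 : x / B < j + 1 := (Nat.div_lt_iff_lt_mul hB).mpr hlt
        omega
      exact ⟨by omega, hdiv⟩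
  rw [hico, Nat.card_Ico]
  omega

lemma numMono_decomp (hdvd : B ∣ K*n) (label : Fin (K*n) → Fin K)
    (p : Equiv.Perm (Fin (K*n))) :
    numMono B label p = ∑ c : Fin K, NB K n B (Sc label p c) := by
  classical
  have hNB : ∀ c, NB K n B (Sc label p c)
      = ∑ j ∈ range (K*n/B), if blockF K n B j ⊆ Sc label p c then 1 else 0 := by
    intro c
    rw [NB, Finset.card_filter]
  simp only [hNB]
  rw [Finset.sum_comm]
  rw [numMono, Finset.card_filter]
  refine Finset.sum_congr rfl fun j hj => ?_
  rw [Finset.mem_range] at hj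
  by_cases hmono : MonoBatch B label p j
  · rw [if_pos hmono]
    have hjB : j * B < K*n := by
      have h1 : (j+1) * B ≤ (K*n/B) * B := Nat.mul_le_mul_right _ hj
      rw [Nat.div_mul_cancel hdvd] at h1
      have h2 : j * B < (j+1) * B ∨ B = 0 := by
        rcases Nat.eq_zero_or_pos B with h | h
        · right; exact h
        · left; exact (Nat.mul_lt_mul_right h).mpr (by omega)
      rcases h2 with h2 | h2
      · omega
      · exfalso
        rw [h2, Nat.div_zero] at hj
        omega
    have hBpos : 0 < B := by
      by_contra hcon
      push_neg at hcon
      interval_cases B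
      · rw [Nat.div_zero] at hj; omega
    set i₀ : Fin (K*n) := ⟨j*B, hjB⟩ with hi₀def
    have hi₀ : (i₀ : ℕ)/B = j := by
      show j*B/B = j
      exact Nat.mul_div_cancel j hBpos
    set c₀ := label (p i₀) with hc₀
    have huniq : ∀ c : Fin K, (blockF K n B j ⊆ Sc label p c) ↔ c = c₀ := by
      intro c
      constructor
      · intro hsub
        have hmem : i₀ ∈ blockF K n B j := by
          rw [blockF, Finset.mem_filter]; exact ⟨Finset.mem_univ _, hi₀⟩
        have h2 := hsub hmem
        rw [Sc, Finset.mem_filter] at h2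
        rw [hc₀, ← h2.2]
      · rintro rfl
        intro i hi
        rw [blockF, Finset.mem_filter] at hi
        rw [Sc, Finset.mem_filter]
        exact ⟨Finset.mem_univ _, hmono i i₀ hi.2 hi₀⟩
    symm
    calc (∑ c : Fin K, if blockF K n B j ⊆ Sc label p c then 1 else 0)
        = ∑ c : Fin K, if c = c₀ then 1 else 0 :=
          Finset.sum_congr rfl fun c _ => if_congr (huniq c) rfl rfl
      _ = 1 := by simp
  · rw [if_neg hmono]
    symm
    apply Finset.sum_eq_zero
    intro c _
    rw [if_neg]
    intro hsub
    apply hmono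
    intro i₁ i₂ h₁ h₂
    have m1 : i₁ ∈ blockF K n B j := by
      rw [blockF, Finset.mem_filter]; exact ⟨Finset.mem_univ _, h₁⟩
    have m2 : i₂ ∈ blockF K n B j := by
      rw [blockF, Finset.mem_filter]; exact ⟨Finset.mem_univ _, h₂⟩
    have e1 := hsub m1
    have e2 := hsub m2
    rw [Sc, Finset.mem_filter] at e1 e2
    rw [e1.2, e2.2]

end Blocks

section MGF

variable {K n B : ℕ}

lemma mgf_NB (hK : 1 ≤ K) (t : ℝ) :
    Esub (Fin (K*n)) n (fun S => Real.exp (t * (NB K n B S : ℝ)))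
      ≤ Real.exp (t * Esub (Fin (K*n)) n (fun S => (NB K n B S : ℝ)))
        * Real.cosh t ^ (K*n/B) := by
  classical
  have hn : n ≤ Fintype.card (Fin (K*n)) := by
    rw [Fintype.card_fin]; exact Nat.le_mul_of_pos_left n hK
  set f : ℕ → Finset (Fin (K*n)) → ℝ :=
    fun j S => Real.exp (t * (if blockF K n B j ⊆ S then (1:ℝ) else 0)) with hfdef
  set q : ℕ → ℝ :=
    fun j => Esub (Fin (K*n)) n (fun S => if blockF K n B j ⊆ S then (1:ℝ) else 0) with hqdef
  have hpoint : ∀ S, Real.exp (t * (NB K n B S : ℝ)) = ∏ j ∈ range (K*n/B), f j S := by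
    intro S
    rw [NB, Finset.card_filter]
    push_cast
    rw [Finset.mul_sum, Real.exp_sum]
  have hnn : ∀ j ∈ range (K*n/B), ∀ S, 0 ≤ f j S := fun j _ S => (Real.exp_pos _).le
  have hloc : ∀ j ∈ range (K*n/B), ∀ S, f j (S ∩ blockF K n B j) = f j S := by
    intro j _ S
    simp only [hfdef, Finset.subset_inter_iff, Finset.Subset.refl, and_true]
  have hind : ∀ (j : ℕ) {S T : Finset (Fin (K*n))}, S ⊆ T →
      (if blockF K n B j ⊆ S then (1:ℝ) else 0) ≤ (if blockF K n B j ⊆ T then 1 else 0) := by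
    intro j S T hST
    by_cases h1 : blockF K n B j ⊆ S
    · rw [if_pos h1, if_pos (h1.trans hST)]
    · rw [if_neg h1]
      split_ifs <;> norm_num
  have hmono : (∀ j ∈ range (K*n/B), Monotone (f j))
      ∨ (∀ j ∈ range (K*n/B), Antitone (f j)) := by
    rcases le_total 0 t with ht | ht
    · left
      intro j _ S T hST
      exact Real.exp_le_exp.mpr (mul_le_mul_of_nonneg_left (hind j hST) ht)
    · right
      intro j _ S T hST
      exact Real.exp_le_exp.mpr (mul_le_mul_of_nonpos_left (hind j hST) ht)
  have hEf : ∀ j, Esub (Fin (K*n)) n (f j) = 1 + (Real.exp t - 1) * q j := by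
    intro j
    rw [hqdef, ← Esub_affine hn]
    apply Esub_congr
    intro S
    by_cases h : blockF K n B j ⊆ S
    · simp only [hfdef, if_pos h, mul_one]
      ring
    · simp only [hfdef, if_neg h, mul_zero, Real.exp_zero]
      ring
  have hq0 : ∀ j, 0 ≤ q j := by
    intro j
    refine Esub_nonneg fun S => ?_
    split_ifs <;> norm_num
  have hq1 : ∀ j, q j ≤ 1 := by
    intro j
    have h1 : Esub (Fin (K*n)) n (fun S => if blockF K n B j ⊆ S then (1:ℝ) else 0)
        ≤ Esub (Fin (K*n)) n (fun _ => (1:ℝ)) := by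
      refine Esub_mono fun S => ?_
      split_ifs <;> norm_num
    rw [Esub_const_one hn] at h1
    exact h1
  have hblock : ∀ j ∈ range (K*n/B), Esub (Fin (K*n)) n (f j)
      ≤ Real.exp (t * q j) * Real.cosh t := by
    intro j _
    rw [hEf j]
    have heq : 1 + (Real.exp t - 1) * q j = 1 - q j + q j * Real.exp t := by ring
    rw [heq]
    exact mgf_bernoulli t (q j) (hq0 j) (hq1 j)
  have hNsum : Esub (Fin (K*n)) n (fun S => (NB K n B S : ℝ)) = ∑ j ∈ range (K*n/B), q j := by
    simp only [hqdef]
    rw [← Esub_sum]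
    apply Esub_congr
    intro S
    rw [NB, Finset.card_filter]
    push_cast
    rfl
  calc Esub (Fin (K*n)) n (fun S => Real.exp (t * (NB K n B S : ℝ)))
      = Esub (Fin (K*n)) n (fun S => ∏ j ∈ range (K*n/B), f j S) := Esub_congr hpoint
    _ ≤ ∏ j ∈ range (K*n/B), Esub (Fin (K*n)) n (f j) :=
        corr_prod hn (range (K*n/B)) (blockF K n B) f
          (fun i _ j _ hij => blockF_disj hij) hnn hloc hmono
    _ ≤ ∏ j ∈ range (K*n/B), (Real.exp (t * q j) * Real.cosh t) :=
        Finset.prod_le_prod (fun j hj => Esub_nonneg fun S => hnn j hj S) hblock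
    _ = Real.exp (t * ∑ j ∈ range (K*n/B), q j) * Real.cosh t ^ (K*n/B) := by
        rw [Finset.prod_mul_distrib, Finset.prod_const, Finset.card_range, ← Real.exp_sum,
          Finset.mul_sum]
    _ = Real.exp (t * Esub (Fin (K*n)) n (fun S => (NB K n B S : ℝ)))
          * Real.cosh t ^ (K*n/B) := by rw [hNsum]

end MGF


/-- For `Kn` items with exactly `n` items of each of `K` labels,
partitioned by a uniform permutation into batches of size `B ∣ Kn`:
`E[T] = (K²n/B)·C(n,B)/C(Kn,B)`, and for all `ε > 0`,
`P(|T − E[T]| ≥ ε) ≤ 2 exp(−Bε²/(2nK³))`. -/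
theorem statement10 (K n B : ℕ) (hK : 1 ≤ K) (hn : 1 ≤ n) (hB : 1 ≤ B) (hdvd : B ∣ K * n)
    (label : Fin (K * n) → Fin K)
    (hbal : ∀ c : Fin K, (Finset.univ.filter (fun i => label i = c)).card = n) :
    expMono B label =
      ((K : ℝ) ^ 2 * n / B) * (n.choose B : ℝ) / ((K * n).choose B : ℝ) ∧
    ∀ ε : ℝ, 0 < ε →
      (Nat.card {π : Equiv.Perm (Fin (K * n)) //
          ε ≤ |(numMono B label π : ℝ) - expMono B label|} : ℝ) /
          (Fintype.card (Equiv.Perm (Fin (K * n))) : ℝ) ≤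
        2 * Real.exp (-(B * ε ^ 2) / (2 * n * K ^ 3)) := by
  classical
  have hn' : n ≤ K * n := Nat.le_mul_of_pos_left n hK
  have hKn0 : 0 < K * n := by positivity
  have hBm : B ≤ K * n := Nat.le_of_dvd hKn0 hdvd
  have hMB : (K*n/B) * B = K*n := Nat.div_mul_cancel hdvd
  have hM1 : 1 ≤ K*n/B := (Nat.one_le_div_iff hB).mpr hBm
  have hC0 : (0:ℝ) < ((K*n).choose n : ℝ) := by exact_mod_cast Nat.choose_pos hn'
  have hCmB0 : (0:ℝ) < ((K*n).choose B : ℝ) := by exact_mod_cast Nat.choose_pos hBm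
  -- value of the per-block inclusion probability
  have hqval : ∀ j ∈ range (K*n/B),
      Esub (Fin (K*n)) n (fun S => if blockF K n B j ⊆ S then (1:ℝ) else 0)
        = (if B ≤ n then ((K*n - B).choose (n - B) : ℝ) else 0) / ((K*n).choose n : ℝ) := by
    intro j hj
    rw [Esub]
    simp only [Fintype.card_fin]
    congr 1
    rw [Finset.sum_boole]
    by_cases hBn : B ≤ n
    · rw [if_pos hBn,
        count_supersets (blockF K n B j) (blockF_card hB hdvd (Finset.mem_range.mp hj)) hBn]
      simp [Fintype.card_fin]
    · rw [if_neg hBn]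
      rw [count_supersets_zero (blockF K n B j)
        (blockF_card hB hdvd (Finset.mem_range.mp hj)) (by omega)]
      simp
  have hENsum : Esub (Fin (K*n)) n (fun S => (NB K n B S : ℝ))
      = ∑ j ∈ range (K*n/B),
          Esub (Fin (K*n)) n (fun S => if blockF K n B j ⊆ S then (1:ℝ) else 0) := by
    rw [← Esub_sum]
    apply Esub_congr
    intro S
    rw [NB, Finset.card_filter]
    push_cast
    rfl
  have hEN : Esub (Fin (K*n)) n (fun S => (NB K n B S : ℝ))
      = ((K*n/B : ℕ) : ℝ)
        * ((if B ≤ n then ((K*n - B).choose (n - B) : ℝ) else 0) / ((K*n).choose n : ℝ)) := by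
    rw [hENsum, Finset.sum_congr rfl hqval, Finset.sum_const, Finset.card_range, nsmul_eq_mul]
  have hdecomp : ∀ p : Equiv.Perm (Fin (K*n)), ((numMono B label p : ℝ))
      = ∑ c : Fin K, (NB K n B (Sc label p c) : ℝ) := by
    intro p
    rw [numMono_decomp hdvd]
    push_cast
    rfl
  have hexpKEN : expMono B label
      = (K:ℝ) * Esub (Fin (K*n)) n (fun S => (NB K n B S : ℝ)) := by
    rw [expMono]
    rw [Finset.sum_congr rfl (fun p _ => hdecomp p), Finset.sum_comm, Finset.sum_div]
    rw [Finset.sum_congr rfl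
      (fun c _ => transfer label hK hbal c (fun S => (NB K n B S : ℝ)))]
    rw [Finset.sum_const, Finset.card_univ, Fintype.card_fin, nsmul_eq_mul]
  constructor
  · -- expectation formula
    rw [hexpKEN, hEN]
    by_cases hBn : B ≤ n
    · rw [if_pos hBn]
      have hid : ((K*n).choose n : ℝ) * (n.choose B : ℝ)
          = ((K*n).choose B : ℝ) * ((K*n - B).choose (n - B) : ℝ) := by
        rw [Nat.cast_choose ℝ hn', Nat.cast_choose ℝ hBn, Nat.cast_choose ℝ hBm,
          Nat.cast_choose ℝ (by omega : n - B ≤ K*n - B)]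
        have hsub : K*n - B - (n - B) = K*n - n := by omega
        rw [hsub]
        have f1 : ((Nat.factorial n : ℕ) : ℝ) ≠ 0 := by
          exact_mod_cast (Nat.factorial_pos n).ne'
        have f2 : ((Nat.factorial (K*n - n) : ℕ) : ℝ) ≠ 0 := by
          exact_mod_cast (Nat.factorial_pos (K*n - n)).ne'
        have f3 : ((Nat.factorial B : ℕ) : ℝ) ≠ 0 := by
          exact_mod_cast (Nat.factorial_pos B).ne'
        have f4 : ((Nat.factorial (n - B) : ℕ) : ℝ) ≠ 0 := by
          exact_mod_cast (Nat.factorial_pos (n - B)).ne'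
        have f5 : ((Nat.factorial (K*n - B) : ℕ) : ℝ) ≠ 0 := by
          exact_mod_cast (Nat.factorial_pos (K*n - B)).ne'
        field_simp
      have hfrac : ((K*n - B).choose (n - B) : ℝ) / ((K*n).choose n : ℝ)
          = (n.choose B : ℝ) / ((K*n).choose B : ℝ) := by
        rw [div_eq_div_iff hC0.ne' hCmB0.ne']
        linarith [hid]
      have hMBR : ((K*n/B : ℕ) : ℝ) * (B:ℝ) = (K:ℝ) * (n:ℝ) := by
        exact_mod_cast congrArg (Nat.cast (R := ℝ)) hMB
      have hB0 : ((B:ℝ)) ≠ 0 := by positivity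
      have hKM : (K:ℝ) * ((K*n/B : ℕ):ℝ) = (K:ℝ)^2*(n:ℝ)/(B:ℝ) := by
        rw [eq_div_iff hB0]
        linear_combination (K:ℝ) * hMBR
      calc (K:ℝ) * (((K*n/B : ℕ):ℝ)
              * (((K*n - B).choose (n - B) : ℝ) / ((K*n).choose n : ℝ)))
          = (K:ℝ) * (((K*n/B : ℕ):ℝ)
              * ((n.choose B : ℝ) / ((K*n).choose B : ℝ))) := by rw [hfrac]
        _ = ((K:ℝ) * ((K*n/B : ℕ):ℝ)) * (n.choose B : ℝ) / ((K*n).choose B : ℝ) := by ring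
        _ = ((K:ℝ)^2*(n:ℝ)/(B:ℝ)) * (n.choose B : ℝ) / ((K*n).choose B : ℝ) := by rw [hKM]
    · rw [if_neg hBn]
      push_neg at hBn
      rw [Nat.choose_eq_zero_of_lt hBn]
      simp
  · -- concentration
    intro ε hε
    have hcard0 : (0:ℝ) < (Fintype.card (Equiv.Perm (Fin (K*n))) : ℝ) := by
      exact_mod_cast Fintype.card_pos
    have hKR : (0:ℝ) < (K:ℝ) := by exact_mod_cast hK
    have hMnR : (0:ℝ) < ((K*n/B : ℕ):ℝ) := by exact_mod_cast hM1
    set EN := Esub (Fin (K*n)) n (fun S => (NB K n B S : ℝ)) with hENdef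
    -- the MGF bound over permutations
    have hMGF : ∀ t : ℝ,
        (∑ p : Equiv.Perm (Fin (K*n)),
            Real.exp (t * ((numMono B label p : ℝ) - expMono B label)))
          ≤ (Fintype.card (Equiv.Perm (Fin (K*n))) : ℝ)
            * Real.exp (t^2 * (K:ℝ)^2 * ((K*n/B : ℕ):ℝ) / 2) := by
      intro t
      have hGdec : ∀ p : Equiv.Perm (Fin (K*n)),
          (numMono B label p : ℝ) - expMono B label
            = ∑ c : Fin K, ((NB K n B (Sc label p c) : ℝ) - EN) := by
        intro p
        rw [Finset.sum_sub_distrib, Finset.sum_const, Finset.card_univ, Fintype.card_fin,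
          nsmul_eq_mul, hexpKEN, hdecomp p]
      have hpt : ∀ p : Equiv.Perm (Fin (K*n)),
          Real.exp (t * ((numMono B label p : ℝ) - expMono B label))
            ≤ ∑ c : Fin K, ((K:ℝ))⁻¹
                * Real.exp ((t*(K:ℝ)) * ((NB K n B (Sc label p c) : ℝ) - EN)) := by
        intro p
        rw [hGdec p, Finset.mul_sum]
        have hjen := convexOn_exp.map_sum_le (t := (univ : Finset (Fin K)))
          (w := fun _ => ((K:ℝ))⁻¹)
          (p := fun c => (K:ℝ) * (t * ((NB K n B (Sc label p c) : ℝ) - EN)))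
          (fun _ _ => by positivity)
          (by
            rw [Finset.sum_const, Finset.card_univ, Fintype.card_fin, nsmul_eq_mul]
            field_simp)
          (fun _ _ => Set.mem_univ _)
        simp only [smul_eq_mul] at hjen
        have harg : ∑ c : Fin K,
            ((K:ℝ))⁻¹ * ((K:ℝ) * (t * ((NB K n B (Sc label p c) : ℝ) - EN)))
            = ∑ c : Fin K, t * ((NB K n B (Sc label p c) : ℝ) - EN) := by
          refine Finset.sum_congr rfl fun c _ => ?_
          field_simp
        rw [harg] at hjen
        refine hjen.trans (le_of_eq ?_)
        refine Finset.sum_congr rfl fun c _ => ?_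
        have : (K:ℝ) * (t * ((NB K n B (Sc label p c) : ℝ) - EN))
            = (t*(K:ℝ)) * ((NB K n B (Sc label p c) : ℝ) - EN) := by ring
        rw [this]
      have hEexp : Esub (Fin (K*n)) n
          (fun S => Real.exp ((t*(K:ℝ)) * ((NB K n B S : ℝ) - EN)))
          ≤ Real.exp (t^2 * (K:ℝ)^2 * ((K*n/B : ℕ):ℝ) / 2) := by
        have hnle : n ≤ Fintype.card (Fin (K*n)) := by
          rw [Fintype.card_fin]; exact hn'
        have h1 : Esub (Fin (K*n)) n
            (fun S => Real.exp ((t*(K:ℝ)) * ((NB K n B S : ℝ) - EN)))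
            = Real.exp (-(t*(K:ℝ))*EN)
              * Esub (Fin (K*n)) n (fun S => Real.exp ((t*(K:ℝ)) * (NB K n B S : ℝ))) := by
          have hpw : ∀ S : Finset (Fin (K*n)),
              Real.exp ((t*(K:ℝ)) * ((NB K n B S : ℝ) - EN))
              = 0 + Real.exp (-(t*(K:ℝ))*EN)
                  * Real.exp ((t*(K:ℝ)) * (NB K n B S : ℝ)) := by
            intro S
            rw [zero_add, ← Real.exp_add]
            congr 1
            ring
          rw [Esub_congr hpw, Esub_affine hnle, zero_add]
        rw [h1]
        have h2 := mgf_NB (K := K) (n := n) (B := B) hK (t*(K:ℝ))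
        rw [← hENdef] at h2
        calc Real.exp (-(t*(K:ℝ))*EN)
              * Esub (Fin (K*n)) n (fun S => Real.exp ((t*(K:ℝ)) * (NB K n B S : ℝ)))
            ≤ Real.exp (-(t*(K:ℝ))*EN)
              * (Real.exp ((t*(K:ℝ)) * EN) * Real.cosh (t*(K:ℝ)) ^ (K*n/B)) :=
              mul_le_mul_of_nonneg_left h2 (Real.exp_pos _).le
          _ = Real.cosh (t*(K:ℝ)) ^ (K*n/B) := by
              rw [← mul_assoc, ← Real.exp_add]
              norm_num
          _ ≤ (Real.exp ((t*(K:ℝ))^2/2)) ^ (K*n/B) := by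
              apply pow_le_pow_left₀ (Real.cosh_pos _).le
              exact Real.cosh_le_exp_half_sq _
          _ = Real.exp (t^2 * (K:ℝ)^2 * ((K*n/B : ℕ):ℝ) / 2) := by
              rw [← Real.exp_nat_mul]
              congr 1
              ring
      calc (∑ p : Equiv.Perm (Fin (K*n)),
              Real.exp (t * ((numMono B label p : ℝ) - expMono B label)))
          ≤ ∑ p : Equiv.Perm (Fin (K*n)), ∑ c : Fin K,
              ((K:ℝ))⁻¹ * Real.exp ((t*(K:ℝ)) * ((NB K n B (Sc label p c) : ℝ) - EN)) :=
            Finset.sum_le_sum fun p _ => hpt p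
        _ = ∑ c : Fin K, ∑ p : Equiv.Perm (Fin (K*n)),
              ((K:ℝ))⁻¹ * Real.exp ((t*(K:ℝ)) * ((NB K n B (Sc label p c) : ℝ) - EN)) :=
            Finset.sum_comm
        _ = ∑ c : Fin K, ((K:ℝ))⁻¹ * ((Fintype.card (Equiv.Perm (Fin (K*n))) : ℝ)
              * Esub (Fin (K*n)) n
                  (fun S => Real.exp ((t*(K:ℝ)) * ((NB K n B S : ℝ) - EN)))) := by
            refine Finset.sum_congr rfl fun c _ => ?_
            rw [← Finset.mul_sum]
            congr 1
            have htr := transfer label hK hbal c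
              (fun S => Real.exp ((t*(K:ℝ)) * ((NB K n B S : ℝ) - EN)))
            rw [div_eq_iff hcard0.ne'] at htr
            rw [htr]
            ring
        _ ≤ ∑ c : Fin K, ((K:ℝ))⁻¹ * ((Fintype.card (Equiv.Perm (Fin (K*n))) : ℝ)
              * Real.exp (t^2 * (K:ℝ)^2 * ((K*n/B : ℕ):ℝ) / 2)) := by
            refine Finset.sum_le_sum fun c _ => ?_
            refine mul_le_mul_of_nonneg_left ?_ (by positivity)
            exact mul_le_mul_of_nonneg_left hEexp hcard0.le
        _ = (Fintype.card (Equiv.Perm (Fin (K*n))) : ℝ)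
              * Real.exp (t^2 * (K:ℝ)^2 * ((K*n/B : ℕ):ℝ) / 2) := by
            rw [Finset.sum_const, Finset.card_univ, Fintype.card_fin, nsmul_eq_mul]
            field_simp
    -- Chernoff, both tails
    set lam : ℝ := ε / ((K:ℝ)^2 * ((K*n/B : ℕ):ℝ)) with hlam
    have hlam0 : 0 < lam := by
      rw [hlam]
      positivity
    have hexpo : lam^2 * (K:ℝ)^2 * ((K*n/B : ℕ):ℝ)/2 - lam * ε
        = -(B*ε^2)/(2*n*(K:ℝ)^3) := by
      have hMnB : ((K*n/B : ℕ):ℝ) * (B:ℝ) = (K:ℝ) * (n:ℝ) := by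
        exact_mod_cast congrArg (Nat.cast (R := ℝ)) hMB
      have hnR : (0:ℝ) < (n:ℝ) := by exact_mod_cast hn
      have hBR : (0:ℝ) < (B:ℝ) := by exact_mod_cast hB
      rw [hlam]
      field_simp
      ring_nf
      linarith [hMnB]
    have key : ∀ X : Equiv.Perm (Fin (K*n)) → ℝ,
        ((∑ p : Equiv.Perm (Fin (K*n)), Real.exp (lam * X p))
          ≤ (Fintype.card (Equiv.Perm (Fin (K*n))) : ℝ)
            * Real.exp (lam^2 * (K:ℝ)^2 * ((K*n/B : ℕ):ℝ) / 2)) →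
        (((univ : Finset (Equiv.Perm (Fin (K*n)))).filter (fun p => ε ≤ X p)).card : ℝ)
          ≤ (Fintype.card (Equiv.Perm (Fin (K*n))) : ℝ)
            * Real.exp (-(B*ε^2)/(2*n*(K:ℝ)^3)) := by
      intro X hX
      have h1 : (((univ : Finset (Equiv.Perm (Fin (K*n)))).filter
            (fun p => ε ≤ X p)).card : ℝ) * Real.exp (lam * ε)
          ≤ ∑ p : Equiv.Perm (Fin (K*n)), Real.exp (lam * X p) := by
        calc (((univ : Finset (Equiv.Perm (Fin (K*n)))).filter
              (fun p => ε ≤ X p)).card : ℝ) * Real.exp (lam * ε)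
            = ∑ _p ∈ (univ : Finset (Equiv.Perm (Fin (K*n)))).filter (fun p => ε ≤ X p),
                Real.exp (lam * ε) := by
              rw [Finset.sum_const, nsmul_eq_mul]
          _ ≤ ∑ p ∈ (univ : Finset (Equiv.Perm (Fin (K*n)))).filter (fun p => ε ≤ X p),
                Real.exp (lam * X p) := by
              refine Finset.sum_le_sum fun p hp => ?_
              exact Real.exp_le_exp.mpr
                (mul_le_mul_of_nonneg_left (Finset.mem_filter.mp hp).2 hlam0.le)
          _ ≤ ∑ p : Equiv.Perm (Fin (K*n)), Real.exp (lam * X p) :=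
              Finset.sum_le_sum_of_subset_of_nonneg (Finset.filter_subset _ _)
                (fun p _ _ => (Real.exp_pos _).le)
      have h2 := h1.trans hX
      have h3 : (((univ : Finset (Equiv.Perm (Fin (K*n)))).filter
            (fun p => ε ≤ X p)).card : ℝ)
          ≤ (Fintype.card (Equiv.Perm (Fin (K*n))) : ℝ)
            * Real.exp (lam^2 * (K:ℝ)^2 * ((K*n/B : ℕ):ℝ)/2 - lam * ε) := by
        rw [Real.exp_sub, ← mul_div_assoc, le_div_iff₀ (Real.exp_pos _)]
        exact h2
      rwa [hexpo] at h3
    have hupper := key (fun p => (numMono B label p : ℝ) - expMono B label) (hMGF lam)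
    have hlowMGF : (∑ p : Equiv.Perm (Fin (K*n)),
        Real.exp (lam * (-((numMono B label p : ℝ) - expMono B label))))
        ≤ (Fintype.card (Equiv.Perm (Fin (K*n))) : ℝ)
          * Real.exp (lam^2 * (K:ℝ)^2 * ((K*n/B : ℕ):ℝ) / 2) := by
      have h := hMGF (-lam)
      have heq : ∀ p : Equiv.Perm (Fin (K*n)),
          Real.exp (lam * (-((numMono B label p : ℝ) - expMono B label)))
          = Real.exp ((-lam) * ((numMono B label p : ℝ) - expMono B label)) := by
        intro p; congr 1; ring
      rw [Finset.sum_congr rfl (fun p _ => heq p)]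
      calc _ ≤ (Fintype.card (Equiv.Perm (Fin (K*n))) : ℝ)
            * Real.exp ((-lam)^2 * (K:ℝ)^2 * ((K*n/B : ℕ):ℝ) / 2) := h
        _ = _ := by rw [neg_sq]
    have hlower := key (fun p => -((numMono B label p : ℝ) - expMono B label)) hlowMGF
    -- combine the two tails
    have hsplit : (((univ : Finset (Equiv.Perm (Fin (K*n)))).filter
          (fun p => ε ≤ |(numMono B label p : ℝ) - expMono B label|)).card : ℝ)
        ≤ (((univ : Finset (Equiv.Perm (Fin (K*n)))).filter
            (fun p => ε ≤ (numMono B label p : ℝ) - expMono B label)).card : ℝ)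
          + (((univ : Finset (Equiv.Perm (Fin (K*n)))).filter
            (fun p => ε ≤ -((numMono B label p : ℝ) - expMono B label))).card : ℝ) := by
      have hsub : ((univ : Finset (Equiv.Perm (Fin (K*n)))).filter
            (fun p => ε ≤ |(numMono B label p : ℝ) - expMono B label|))
          ⊆ ((univ : Finset (Equiv.Perm (Fin (K*n)))).filter
              (fun p => ε ≤ (numMono B label p : ℝ) - expMono B label))
            ∪ ((univ : Finset (Equiv.Perm (Fin (K*n)))).filter
              (fun p => ε ≤ -((numMono B label p : ℝ) - expMono B label))) := by
        intro p hp
        rw [Finset.mem_filter] at hp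
        rw [Finset.mem_union, Finset.mem_filter, Finset.mem_filter]
        rcases le_abs.mp hp.2 with h | h
        · exact Or.inl ⟨Finset.mem_univ _, h⟩
        · exact Or.inr ⟨Finset.mem_univ _, h⟩
      calc (((univ : Finset (Equiv.Perm (Fin (K*n)))).filter
            (fun p => ε ≤ |(numMono B label p : ℝ) - expMono B label|)).card : ℝ)
          ≤ ((((univ : Finset (Equiv.Perm (Fin (K*n)))).filter
              (fun p => ε ≤ (numMono B label p : ℝ) - expMono B label))
            ∪ ((univ : Finset (Equiv.Perm (Fin (K*n)))).filter
              (fun p => ε ≤ -((numMono B label p : ℝ) - expMono B label)))).card : ℝ) := by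
            exact_mod_cast Finset.card_le_card hsub
        _ ≤ _ := by
            exact_mod_cast Finset.card_union_le _ _
    have hNatcard : (Nat.card {π : Equiv.Perm (Fin (K * n)) //
          ε ≤ |(numMono B label π : ℝ) - expMono B label|} : ℝ)
        = (((univ : Finset (Equiv.Perm (Fin (K*n)))).filter
            (fun p => ε ≤ |(numMono B label p : ℝ) - expMono B label|)).card : ℝ) := by
      rw [Nat.card_eq_fintype_card, Fintype.card_subtype]
    rw [hNatcard, div_le_iff₀ hcard0]
    calc (((univ : Finset (Equiv.Perm (Fin (K*n)))).filter
          (fun p => ε ≤ |(numMono B label p : ℝ) - expMono B label|)).card : ℝ)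
        ≤ _ + _ := hsplit
      _ ≤ (Fintype.card (Equiv.Perm (Fin (K*n))) : ℝ)
            * Real.exp (-(B*ε^2)/(2*n*(K:ℝ)^3))
          + (Fintype.card (Equiv.Perm (Fin (K*n))) : ℝ)
            * Real.exp (-(B*ε^2)/(2*n*(K:ℝ)^3)) := add_le_add hupper hlower
      _ = 2 * Real.exp (-(B * ε ^ 2) / (2 * n * (K:ℝ) ^ 3))
          * (Fintype.card (Equiv.Perm (Fin (K*n))) : ℝ) := by
          push_cast
          ring


end SGDBN10
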